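/- arXiv:1910.09190 — 4 statements merged into one kernel-verified Lean document; each statement's English description precedes it below -/
import Mathlib

section
/- An identity w ≈ w' holds in every Rees matrix semigroup over an abelian group if and only if: (a) w and w' begin with the same letter; (b) w and w' end with the same letter; (c) for every word v of length 2, the number of occurrences of v as a factor of w equals the number of its occurrences as a factor of w'. -/
set_option linter.unnecessarySeqFocus false

/-- The Rees matrix multiplication on `(I × G × Λ) ∪ {0}`, with `0` modelled by `none`. -/
def reesMul {I G Λ : Type*} [Group G] (P : Λ → I → Option G) :
    Option (I × G × Λ) → Option (I × G × Λ) → Option (I × G × Λ)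
  | some (i, g, l), some (j, h, m) => (P l j).map fun p => (i, g * p * h, m)
  | _, _ => none

theorem reesMul_assoc {I G Λ : Type*} [Group G] (P : Λ → I → Option G)
    (a b c : Option (I × G × Λ)) :
    reesMul P (reesMul P a b) c = reesMul P a (reesMul P b c) := by
  rcases a with _ | ⟨i, g, l⟩ <;> rcases b with _ | ⟨j, h, m⟩ <;>
    rcases c with _ | ⟨k, f, r⟩ <;> simp [reesMul] <;>
    rcases hlj : P l j with _ | p <;> rcases hmk : P m k with _ | q <;>
    simp [reesMul, hlj, hmk, mul_assoc]

/-- The Rees matrix semigroup `M⁰(I, G, Λ; P)` over the group `G`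
with sandwich matrix `P`. -/
def ReesMatrixSemigroup (I G Λ : Type*) [Group G] (P : Λ → I → Option G) :=
  Option (I × G × Λ)

instance {I G Λ : Type*} [Group G] (P : Λ → I → Option G) :
    Semigroup (ReesMatrixSemigroup I G Λ P) where
  mul := reesMul P
  mul_assoc := reesMul_assoc P

/-- The list of letters of a word in the free semigroup. -/
def letters {X : Type*} (w : FreeSemigroup X) : List X := w.head :: w.tail

namespace Stmt7Aux

set_option linter.unusedSectionVars false

variable {X : Type*} {I G Λ : Type*} [CommGroup G]

/-- The `G`-component of `f`, valued in `WithZero G`. -/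
def fgW (f : X → Option (I × G × Λ)) (x : X) : WithZero G :=
  show Option G from (f x).map fun t => t.2.1

/-- The sandwich matrix entry attached to a pair of letters, valued in `WithZero G`. -/
def fpW (P : Λ → I → Option G) (f : X → Option (I × G × Λ)) (q : X × X) : WithZero G :=
  show Option G from (f q.1).bind fun s => (f q.2).bind fun t => P s.2.2 t.1

def toOpt (g : WithZero G) : Option G := g

def nextL (f : X → Option (I × G × Λ)) (l : Λ) (x : X) : Λ :=
  ((f x).map fun t => t.2.2).getD l

def pstepW (P : Λ → I → Option G) (f : X → Option (I × G × Λ)) (l : Λ) (x : X) : WithZero G :=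
  show Option G from (f x).bind fun t => (P l t.1).map fun p => p * t.2.1

def chainW (P : Λ → I → Option G) (f : X → Option (I × G × Λ)) : Λ → List X → WithZero G
  | _, [] => 1
  | l, x :: xs => pstepW P f l x * chainW P f (nextL f l x) xs

@[simp] lemma toOpt_zero : toOpt (0 : WithZero G) = none := rfl
@[simp] lemma none_mul' (a : WithZero G) : (show WithZero G from none) * a = 0 := zero_mul a
@[simp] lemma mul_none' (a : WithZero G) : a * (show WithZero G from none) = 0 := mul_zero a
@[simp] lemma toOpt_one : toOpt (1 : WithZero G) = some 1 := rfl
@[simp] lemma toOpt_coe (g : G) : toOpt (g : WithZero G) = some g := rfl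

lemma reesMul_none_left (P : Λ → I → Option G) (b : Option (I × G × Λ)) :
    reesMul P none b = none := by cases b <;> rfl

lemma foldl_none (P : Λ → I → Option G) (f : X → Option (I × G × Λ)) :
    ∀ ls : List X, ls.foldl (fun acc x => reesMul P acc (f x)) none = none
  | [] => rfl
  | x :: xs => by
      rw [List.foldl_cons, reesMul_none_left]; exact foldl_none P f xs

lemma foldl_some (P : Λ → I → Option G) (f : X → Option (I × G × Λ)) :
    ∀ (ls : List X) (s : I × G × Λ),
      ls.foldl (fun acc x => reesMul P acc (f x)) (some s) =
        (toOpt (chainW P f s.2.2 ls)).map fun g =>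
          (s.1, s.2.1 * g, ls.foldl (nextL f) s.2.2)
  | [], s => by simp [chainW]
  | x :: xs, s => by
      rw [List.foldl_cons]
      rcases hx : f x with _ | t
      · rw [show reesMul P (some s) none = none from rfl, foldl_none]
        simp [chainW, pstepW, hx]
      · rcases hp : P s.2.2 t.1 with _ | p
        · rw [show reesMul P (some s) (some t) = (P s.2.2 t.1).map
            fun p => (s.1, s.2.1 * p * t.2.1, t.2.2) from rfl, hp]
          simp only [Option.map_none]
          rw [foldl_none]
          simp [chainW, pstepW, hx, hp]
        · rw [show reesMul P (some s) (some t) = (P s.2.2 t.1).map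
            fun p => (s.1, s.2.1 * p * t.2.1, t.2.2) from rfl, hp]
          simp only [Option.map_some]
          rw [foldl_some P f xs (s.1, s.2.1 * p * t.2.1, t.2.2)]
          have hnext : nextL f s.2.2 x = t.2.2 := by simp [nextL, hx]
          have hchain : chainW P f s.2.2 (x :: xs) =
              ((p * t.2.1 : G) : WithZero G) * chainW P f t.2.2 xs := by
            rw [chainW, hnext]
            congr 1
            simp [pstepW, hx, hp]
            rfl
          rw [hchain, List.foldl_cons, hnext]
          obtain ⟨o, ho⟩ : ∃ o : Option G, chainW P f t.2.2 xs = o := ⟨chainW P f t.2.2 xs, rfl⟩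
          rw [ho]
          cases o with
          | none => rfl
          | some c =>
            show Option.map _ (some c) = Option.map _ (toOpt ((p * t.2.1 : G) * (c : G) : WithZero G))
            simp [← WithZero.coe_mul, mul_assoc]

lemma chain_eq_prod (P : Λ → I → Option G) (f : X → Option (I × G × Λ)) :
    ∀ (ls : List X) (a : X) (s : I × G × Λ), f a = some s →
      chainW P f s.2.2 ls =
        (ls.map (fgW f)).prod * (((a :: ls).zip ls).map (fpW P f)).prod
  | [], a, s, _ => by simp [chainW]
  | x :: xs, a, s, ha => by
      rcases hx : f x with _ | t
      · have h0 : fgW f x = 0 := by simp [fgW, hx]; rfl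
        have hz : ((x :: xs).map (fgW f)).prod = 0 :=
          List.prod_eq_zero (by simp [h0])
        have h0' : pstepW P f s.2.2 x = 0 := by simp [pstepW, hx]; rfl
        rw [chainW, h0', zero_mul, hz, zero_mul]
      · have hstep : pstepW P f s.2.2 x = fpW P f (a, x) * fgW f x := by
          have : fpW P f (a, x) = show Option G from P s.2.2 t.1 := by
            simp [fpW, ha, hx]; rfl
          rw [this]
          have : fgW f x = ((t.2.1 : G) : WithZero G) := by simp [fgW, hx]; rfl
          rw [this]
          cases hP : P s.2.2 t.1 with
          | none => simp [pstepW, hx, hP]; rfl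
          | some p =>
            show _ = toOpt _
            simp [pstepW, hx, hP]
            rfl
        have hnext : nextL f s.2.2 x = t.2.2 := by simp [nextL, hx]
        rw [chainW, hnext, hstep, chain_eq_prod P f xs x t hx]
        simp only [List.map_cons, List.prod_cons, List.zip_cons_cons]
        ac_rfl

lemma lastL_eq (f : X → Option (I × G × Λ)) :
    ∀ (ls : List X) (a : X) (s : I × G × Λ), f a = some s →
      (∀ x ∈ ls, (f x).isSome) →
      (f ((a :: ls).getLast (List.cons_ne_nil _ _))).map (fun t => t.2.2) =
        some (ls.foldl (nextL f) s.2.2)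
  | [], a, s, ha, _ => by simp [ha]
  | x :: xs, a, s, ha, h => by
      obtain ⟨t, hx⟩ := Option.isSome_iff_exists.1 (h x (by simp))
      have hnext : nextL f s.2.2 x = t.2.2 := by simp [nextL, hx]
      rw [List.getLast_cons (List.cons_ne_nil _ _), List.foldl_cons, hnext]
      exact lastL_eq f xs x t hx (fun y hy => h y (by simp [hy]))

lemma count_letters [DecidableEq X] :
    ∀ (ls : List X) (a z : X),
      (a :: ls).count z =
        ((a :: ls).zip ls).countP (fun q => q.1 = z) +
          (if (a :: ls).getLast (List.cons_ne_nil _ _) = z then 1 else 0)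
  | [], a, z => by
      by_cases h : a = z <;> simp [List.count_cons, h]
  | x :: xs, a, z => by
      rw [List.count_cons, count_letters xs x z, List.getLast_cons (List.cons_ne_nil _ _)]
      simp only [List.zip_cons_cons, List.countP_cons]
      by_cases h : a = z <;> simp [h] <;> omega

lemma ofAdd_pow_inj {n m : ℕ}
    (h : (Multiplicative.ofAdd (ULift.up (1 : ℤ)) : Multiplicative (ULift.{w} ℤ)) ^ n =
      Multiplicative.ofAdd (ULift.up (1 : ℤ)) ^ m) : n = m := by
  have h2 := congrArg (fun u : Multiplicative (ULift.{w} ℤ) => (Multiplicative.toAdd u).down) h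
  simp [toAdd_pow] at h2
  exact_mod_cast h2

lemma count_prod_eq {α β : Type*} [DecidableEq α] [DecidableEq β] (l : List (α × β))
    (q : α × β) : @List.count _ instBEqProd q l = @List.count _ instBEqOfDecidableEq q l := by
  induction l with
  | nil => rfl
  | cons p l ih =>
    obtain ⟨a, b⟩ := p
    obtain ⟨c, d⟩ := q
    by_cases h1 : a = c <;> by_cases h2 : b = d <;>
      simp [List.count_cons, ih, h1, h2,
        show ∀ u v : α × β, (@BEq.beq _ instBEqProd u v) = (u.1 == v.1 && u.2 == v.2) from
          fun _ _ => rfl,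
        show ∀ u v : α × β, (@BEq.beq _ instBEqOfDecidableEq u v) = decide (u = v) from
          fun _ _ => rfl,
        Prod.ext_iff]

lemma phi_eq {Y : Type*} (P : Λ → I → Option G)
    (φ : FreeSemigroup Y →ₙ* ReesMatrixSemigroup I G Λ P) (w : FreeSemigroup Y) :
    φ w = ((fun x => φ (FreeSemigroup.of x)) w.head).bind fun s =>
      (toOpt (chainW P (fun x => φ (FreeSemigroup.of x)) s.2.2 w.tail)).map fun g =>
        (s.1, s.2.1 * g, w.tail.foldl (nextL (fun x => φ (FreeSemigroup.of x))) s.2.2) := by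
  set f : Y → Option (I × G × Λ) := (fun x => φ (FreeSemigroup.of x)) with hf
  have h1 : φ w = w.tail.foldl (fun acc x => reesMul P acc (f x)) (f w.head) := by
    conv_lhs => rw [← FreeSemigroup.lift_comp_of' φ]
    rfl
  rw [h1]
  cases hh : f w.head with
  | none => rw [foldl_none]; rfl
  | some s => rw [foldl_some]; rfl

end Stmt7Aux

open Stmt7Aux

/-- An identity `w ≈ w'` holds in every Rees matrix semigroup over an abelian group
if and only if: (a) `w` and `w'` begin with the same letter; (b) `w` and `w'` end with
the same letter; (c) every word of length 2 occurs as a factor the same number of times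
in `w` as in `w'`. -/
theorem stmt_7 {X : Type u} [DecidableEq X] [Countable X] [Infinite X]
    (w w' : FreeSemigroup X) :
    (∀ (I Λ G : Type v) [CommGroup G] [Nonempty I] [Nonempty Λ]
        (P : Λ → I → Option G)
        (φ : FreeSemigroup X →ₙ* ReesMatrixSemigroup I G Λ P), φ w = φ w') ↔
      (w.head = w'.head ∧
        (letters w).getLast (List.cons_ne_nil _ _) =
          (letters w').getLast (List.cons_ne_nil _ _) ∧
        ∀ x y : X, ((letters w).zip (letters w).tail).count (x, y) =
          ((letters w').zip (letters w').tail).count (x, y)) := by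
  constructor
  · intro H
    obtain ⟨e, he⟩ := Countable.exists_injective_nat X
    set G₀ := Multiplicative (ULift.{v} ℤ) with hG₀
    have hA : w.head = w'.head ∧
        (w.head :: w.tail).getLast (List.cons_ne_nil _ _) =
          (w'.head :: w'.tail).getLast (List.cons_ne_nil _ _) := by
      set P₁ : ULift.{v} ℕ → ULift.{v} ℕ → Option G₀ := fun _ _ => some 1 with hP₁
      set f₁ : X → ReesMatrixSemigroup (ULift.{v} ℕ) G₀ (ULift.{v} ℕ) P₁ :=
        fun z => some (⟨e z⟩, 1, ⟨e z⟩) with hf₁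
      have hφ := H (ULift.{v} ℕ) (ULift.{v} ℕ) G₀ P₁ (FreeSemigroup.lift f₁)
      rw [phi_eq, phi_eq] at hφ
      have hfeq : (fun x => (FreeSemigroup.lift f₁) (FreeSemigroup.of x)) = f₁ := by
        funext z; exact FreeSemigroup.lift_of f₁ z
      rw [hfeq] at hφ
      have hval : ∀ u : FreeSemigroup X, ∃ c : G₀,
          ((f₁ u.head).bind fun s => (toOpt (chainW P₁ f₁ s.2.2 u.tail)).map fun g =>
            (s.1, s.2.1 * g, u.tail.foldl (nextL f₁) s.2.2)) =
          some ((⟨e u.head⟩ : ULift ℕ), 1 * c,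
            u.tail.foldl (nextL f₁) (⟨e u.head⟩ : ULift ℕ)) := by
        intro u
        have hfh : f₁ u.head = some ((⟨e u.head⟩ : ULift ℕ), 1, (⟨e u.head⟩ : ULift ℕ)) := rfl
        have hch := chain_eq_prod P₁ f₁ u.tail u.head _ hfh
        have hA0 : ((u.tail).map (fgW f₁)).prod ≠ 0 := by
          refine List.prod_ne_zero ?_
          intro hmem
          obtain ⟨z, _, hz0⟩ := List.mem_map.1 hmem
          exact WithZero.coe_ne_zero (a := (1 : G₀)) hz0
        have hB0 : (((u.head :: u.tail).zip u.tail).map (fpW P₁ f₁)).prod ≠ 0 := by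
          refine List.prod_ne_zero ?_
          intro hmem
          obtain ⟨z, _, hz0⟩ := List.mem_map.1 hmem
          exact WithZero.coe_ne_zero (a := (1 : G₀)) hz0
        have hch0 : chainW P₁ f₁ (⟨e u.head⟩ : ULift ℕ) u.tail ≠ 0 := by
          rw [hch]; exact mul_ne_zero hA0 hB0
        obtain ⟨o, ho⟩ : ∃ o : Option G₀,
            chainW P₁ f₁ (⟨e u.head⟩ : ULift ℕ) u.tail = o := ⟨_, rfl⟩
        cases o with
        | none => exact absurd ho hch0
        | some c =>
          refine ⟨c, ?_⟩
          rw [hfh, Option.bind_some]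
          show (toOpt (chainW P₁ f₁ (⟨e u.head⟩ : ULift ℕ) u.tail)).map _ = _
          rw [ho]
          rfl
      obtain ⟨c, hcw⟩ := hval w
      obtain ⟨c', hcw'⟩ := hval w'
      rw [hcw, hcw'] at hφ
      have hinj := Option.some.inj hφ
      have hhead : w.head = w'.head := he (by
        have := congrArg (fun t => t.1.down) hinj
        simpa using this)
      refine ⟨hhead, ?_⟩
      have hLw := lastL_eq f₁ w.tail w.head _ (rfl :
          f₁ w.head = some ((⟨e w.head⟩ : ULift ℕ), 1, (⟨e w.head⟩ : ULift ℕ)))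
        (fun z _ => rfl)
      have hLw' := lastL_eq f₁ w'.tail w'.head _ (rfl :
          f₁ w'.head = some ((⟨e w'.head⟩ : ULift ℕ), 1, (⟨e w'.head⟩ : ULift ℕ)))
        (fun z _ => rfl)
      have t1 : (⟨e ((w.head :: w.tail).getLast (List.cons_ne_nil _ _))⟩ : ULift ℕ) =
          w.tail.foldl (nextL f₁) (⟨e w.head⟩ : ULift ℕ) := Option.some.inj hLw
      have t2 : (⟨e ((w'.head :: w'.tail).getLast (List.cons_ne_nil _ _))⟩ : ULift ℕ) =
          w'.tail.foldl (nextL f₁) (⟨e w'.head⟩ : ULift ℕ) := Option.some.inj hLw'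
      have t3 := congrArg (fun t => t.2.2) hinj
      have t4 : (⟨e ((w.head :: w.tail).getLast (List.cons_ne_nil _ _))⟩ : ULift ℕ) =
          (⟨e ((w'.head :: w'.tail).getLast (List.cons_ne_nil _ _))⟩ : ULift ℕ) :=
        t1.trans (t3.trans t2.symm)
      exact he (congrArg ULift.down t4)
    refine ⟨hA.1, hA.2, ?_⟩
    intro x y
    set g₀ : G₀ := Multiplicative.ofAdd ⟨1⟩ with hg₀
    set P₂ : ULift.{v} ℕ → ULift.{v} ℕ → Option G₀ :=
      fun l i => some (if l.down = e x ∧ i.down = e y then g₀ else 1) with hP₂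
    set f₂ : X → ReesMatrixSemigroup (ULift.{v} ℕ) G₀ (ULift.{v} ℕ) P₂ :=
      fun z => some (⟨e z⟩, 1, ⟨e z⟩) with hf₂
    have hφ := H (ULift.{v} ℕ) (ULift.{v} ℕ) G₀ P₂ (FreeSemigroup.lift f₂)
    rw [phi_eq, phi_eq] at hφ
    have hfeq : (fun z => (FreeSemigroup.lift f₂) (FreeSemigroup.of z)) = f₂ := by
      funext z; exact FreeSemigroup.lift_of f₂ z
    rw [hfeq] at hφ
    have pairprod : ∀ q : List (X × X),
        (q.map (fpW P₂ f₂)).prod = ((g₀ ^ q.count (x, y) : G₀) : WithZero G₀) := by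
      intro q
      induction q with
      | nil => simp
      | cons ab q ih =>
        obtain ⟨a, b⟩ := ab
        have hfp : fpW P₂ f₂ (a, b) =
            ((if a = x ∧ b = y then g₀ else 1 : G₀) : WithZero G₀) := by
          show (show Option G₀ from
            some (if e a = e x ∧ e b = e y then g₀ else 1)) = _
          simp only [he.eq_iff]
          rfl
        rw [List.map_cons, List.prod_cons, hfp, ih, List.count_cons]
        by_cases h : (a, b) = (x, y)
        · have hxy : a = x ∧ b = y := by rwa [Prod.mk.injEq] at h
          obtain ⟨rfl, rfl⟩ := hxy
          simp [pow_succ, ← WithZero.coe_mul, ← WithZero.coe_pow, mul_comm]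
        · rw [Prod.mk.injEq] at h
          simp [h, Prod.mk.injEq]
    have gprod : ∀ ls : List X, (ls.map (fgW f₂)).prod = 1 := by
      intro ls
      induction ls with
      | nil => simp
      | cons z ls ih =>
        rw [List.map_cons, List.prod_cons,
          show fgW f₂ z = ((1 : G₀) : WithZero G₀) from rfl, WithZero.coe_one, one_mul, ih]
    have hval : ∀ u : FreeSemigroup X,
        ((f₂ u.head).bind fun s => (toOpt (chainW P₂ f₂ s.2.2 u.tail)).map fun g =>
          (s.1, s.2.1 * g, u.tail.foldl (nextL f₂) s.2.2)) =
        some ((⟨e u.head⟩ : ULift ℕ),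
          1 * g₀ ^ ((u.head :: u.tail).zip u.tail).count (x, y),
          u.tail.foldl (nextL f₂) (⟨e u.head⟩ : ULift ℕ)) := by
      intro u
      have hfh : f₂ u.head = some ((⟨e u.head⟩ : ULift ℕ), 1, (⟨e u.head⟩ : ULift ℕ)) := rfl
      have hch := chain_eq_prod P₂ f₂ u.tail u.head _ hfh
      rw [gprod, one_mul, pairprod] at hch
      rw [hfh, Option.bind_some]
      show (toOpt (chainW P₂ f₂ (⟨e u.head⟩ : ULift ℕ) u.tail)).map _ = _
      rw [hch, toOpt_coe]
      rfl
    rw [hval w, hval w'] at hφ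
    have hinj := Option.some.inj hφ
    have hmid := congrArg (fun t => t.2.1) hinj
    simp only [one_mul] at hmid
    exact ofAdd_pow_inj hmid
  · rintro ⟨h1, h2, h3⟩ I Λ G _ _ _ P φ
    rw [phi_eq P φ w, phi_eq P φ w']
    set f : X → Option (I × G × Λ) := fun x => φ (FreeSemigroup.of x) with hfdef
    have hperm_pairs : ((w.head :: w.tail).zip w.tail).Perm
        ((w'.head :: w'.tail).zip w'.tail) :=
      List.perm_iff_count.2 fun q => by
        obtain ⟨x, y⟩ := q
        exact h3 x y
    have h2' : (w.head :: w.tail).getLast (List.cons_ne_nil _ _) =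
        (w'.head :: w'.tail).getLast (List.cons_ne_nil _ _) := h2
    have hperm_letters : (w.head :: w.tail).Perm (w'.head :: w'.tail) :=
      List.perm_iff_count.2 fun z => by
        rw [count_letters w.tail w.head z, count_letters w'.tail w'.head z,
          hperm_pairs.countP_eq, h2']
    have htails : w.tail.Perm w'.tail := by
      have h := hperm_letters
      rw [h1] at h
      exact h.cons_inv
    rw [h1]
    cases hh : f w'.head with
    | none => rfl
    | some s =>
      have hfw : f w.head = some s := by rw [h1]; exact hh
      have hchain : chainW P f s.2.2 w.tail = chainW P f s.2.2 w'.tail := by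
        rw [chain_eq_prod P f w.tail w.head s hfw, chain_eq_prod P f w'.tail w'.head s hh]
        congr 1
        · exact (htails.map _).prod_eq
        · exact ((hperm_pairs.map _).prod_eq)
      rw [Option.bind_some, Option.bind_some, hchain]
      obtain ⟨o, ho⟩ : ∃ o : Option G, chainW P f s.2.2 w'.tail = o := ⟨_, rfl⟩
      rw [ho]
      cases o with
      | none => rfl
      | some c =>
        have key : ∀ (ls : List X) (a : X), f a = some s →
            chainW P f s.2.2 ls = (show WithZero G from some c) →
            ∀ x ∈ ls, (f x).isSome := by
          intro ls a hfa hc x hx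
          by_contra hns
          have hfx : f x = none := Option.not_isSome_iff_eq_none.1 hns
          have hz0 : fgW f x = 0 := by simp [fgW, hfx]; rfl
          have hz : (ls.map (fgW f)).prod = 0 :=
            List.prod_eq_zero (List.mem_map.2 ⟨x, hx, hz0⟩)
          rw [chain_eq_prod P f ls a s hfa, hz, zero_mul] at hc
          exact WithZero.coe_ne_zero (a := c) hc.symm
        have hw : ∀ x ∈ w.tail, (f x).isSome :=
          key w.tail w.head hfw (hchain.trans ho)
        have hw' : ∀ x ∈ w'.tail, (f x).isSome := key w'.tail w'.head hh ho
        have l1 := lastL_eq f w.tail w.head s hfw hw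
        have l2 := lastL_eq f w'.tail w'.head s hh hw'
        rw [h2', l2] at l1
        have hL : w.tail.foldl (nextL f) s.2.2 = w'.tail.foldl (nextL f) s.2.2 :=
          (Option.some.inj l1).symm
        rw [hL]
end

section
/- Let S be a semigroup and S¹ the monoid obtained by adjoining an identity if necessary. The monoid S¹ satisfies an identity w ≈ w' with content(w) = content(w') if and only if for each proper subset Y of content(w), the identity w_Y ≈ w'_Y holds in S, where w_Y denotes the word obtained from w by deleting all occurrences of letters in Y (with the empty subset Y giving w itself). -/
/-- The product of a nonempty word under a substitution `φ` into a semigroup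
(`none` for the empty word). -/
def sprod {X S : Type*} [Mul S] (φ : X → S) : List X → Option S
  | [] => none
  | x :: xs => some (xs.foldl (fun a y => a * φ y) (φ x))

private def optCoe {S : Type*} : Option S → WithOne S
  | none => 1
  | some s => s

private lemma optCoe_inj {S : Type*} : Function.Injective (optCoe (S := S)) := by
  intro a b h
  cases a <;> cases b <;> simp only [optCoe] at h
  · rfl
  · exact absurd h.symm WithOne.coe_ne_one
  · exact absurd h WithOne.coe_ne_one
  · exact congrArg some (WithOne.coe_inj.mp h)

private lemma foldl_mul {X M : Type*} [Monoid M] (g : X → M) :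
    ∀ (l : List X) (a : M), l.foldl (fun b y => b * g y) a = a * (l.map g).prod
  | [], a => by simp
  | x :: xs, a => by
    simp [foldl_mul g xs (a * g x), mul_assoc]

private lemma coe_foldl {X S : Type*} [Semigroup S] (ψ : X → S) :
    ∀ (l : List X) (a : S),
      ((l.foldl (fun b y => b * ψ y) a : S) : WithOne S)
        = l.foldl (fun b y => b * (ψ y : WithOne S)) (a : WithOne S)
  | [], a => by simp
  | x :: xs, a => by
    simp only [List.foldl_cons, coe_foldl ψ xs (a * ψ x), WithOne.coe_mul]

private lemma optCoe_sprod {X S : Type*} [Semigroup S] (ψ : X → S) (l : List X) :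
    optCoe (sprod ψ l) = (l.map (fun x => (ψ x : WithOne S))).prod := by
  cases l with
  | nil => simp [sprod, optCoe]
  | cons x xs =>
    simp only [sprod, optCoe, List.map_cons, List.prod_cons]
    rw [coe_foldl, foldl_mul]

private lemma prod_filter {X M : Type*} [Monoid M] (φ : X → M) (p : X → Bool) :
    ∀ (l : List X), (∀ x ∈ l, p x = false → φ x = 1) →
      ((l.filter p).map φ).prod = (l.map φ).prod
  | [], _ => rfl
  | x :: xs, h => by
    have ih := prod_filter φ p xs (fun y hy => h y (List.mem_cons_of_mem _ hy))
    by_cases hx : p x = true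
    · simp [List.filter_cons, hx, ih]
    · have hx' : p x = false := by simpa using hx
      simp [List.filter_cons, hx', ih, h x List.mem_cons_self hx']

/-- The monoid `S¹` (here `WithOne S`, i.e. `S` with an adjoined identity) satisfies an
identity `w ≈ w'` with `content w = content w'` if and only if for each proper subset
`Y` of the content of `w`, the identity `w_Y ≈ w'_Y` (obtained by deleting all letters
of `Y`; `Y = ∅` gives `w` itself) holds in `S`. -/
theorem stmt_13 {X S : Type*} [DecidableEq X] [Semigroup S]
    (w w' : List X) (hw : w ≠ []) (hw' : w' ≠ [])
    (hcontent : w.toFinset = w'.toFinset) :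
    (∀ φ : X → WithOne S, (w.map φ).prod = (w'.map φ).prod) ↔
      ∀ Y : Finset X, Y ⊂ w.toFinset →
        ∀ φ : X → S,
          sprod φ (w.filter fun x => decide (x ∉ Y)) =
            sprod φ (w'.filter fun x => decide (x ∉ Y)) := by
  constructor
  · intro h Y _ φ
    set Φ : X → WithOne S := fun x => if x ∈ Y then 1 else (φ x : WithOne S) with hΦ
    apply optCoe_inj
    have key : ∀ v : List X,
        optCoe (sprod φ (v.filter fun x => decide (x ∉ Y))) = (v.map Φ).prod := by
      intro v
      rw [optCoe_sprod]
      rw [← prod_filter Φ (fun x => decide (x ∉ Y)) v (by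
        intro x _ hx
        simp only [decide_eq_false_iff_not, not_not] at hx
        simp [hΦ, hx])]
      congr 1
      apply List.map_congr_left
      intro x hx
      rw [List.mem_filter] at hx
      have hxY : x ∉ Y := by simpa using hx.2
      simp [hΦ, hxY]
    rw [key, key, h Φ]
  · intro h φ
    classical
    by_cases hall : ∀ x ∈ w, φ x = 1
    · have h1 : (w.map φ).prod = 1 := by
        apply List.prod_eq_one
        intro a ha
        obtain ⟨x, hx, rfl⟩ := List.mem_map.mp ha
        exact hall x hx
      have h2 : (w'.map φ).prod = 1 := by
        apply List.prod_eq_one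
        intro a ha
        obtain ⟨x, hx, rfl⟩ := List.mem_map.mp ha
        have hxw : x ∈ w := by
          have : x ∈ w.toFinset := hcontent ▸ (List.mem_toFinset.mpr hx)
          exact List.mem_toFinset.mp this
        exact hall x hxw
      rw [h1, h2]
    · push_neg at hall
      obtain ⟨x₀, hx₀w, hx₀⟩ := hall
      obtain ⟨s₀, hs₀⟩ := WithOne.ne_one_iff_exists.mp hx₀
      set ψ : X → S := fun x => if hx : ∃ s : S, (s : WithOne S) = φ x then hx.choose else s₀
        with hψ
      have hψspec : ∀ x : X, φ x ≠ 1 → (ψ x : WithOne S) = φ x := by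
        intro x hx
        obtain ⟨s, hs⟩ := WithOne.ne_one_iff_exists.mp hx
        have hex : ∃ s : S, (s : WithOne S) = φ x := ⟨s, hs⟩
        simp only [hψ, dif_pos hex]
        exact hex.choose_spec
      set Y : Finset X := w.toFinset.filter (fun x => φ x = 1) with hYdef
      have hY : Y ⊂ w.toFinset := by
        rw [hYdef, Finset.filter_ssubset]
        exact ⟨x₀, List.mem_toFinset.mpr hx₀w, hx₀⟩
      have hYmem : ∀ x : X, x ∈ w.toFinset → (x ∈ Y ↔ φ x = 1) := by
        intro x hx
        simp [hYdef, hx]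
      have key : ∀ v : List X, (∀ x ∈ v, x ∈ w.toFinset) →
          (v.map φ).prod = optCoe (sprod ψ (v.filter fun x => decide (x ∉ Y))) := by
        intro v hv
        rw [optCoe_sprod]
        rw [← prod_filter φ (fun x => decide (x ∉ Y)) v (by
          intro x hx hfx
          simp only [decide_eq_false_iff_not, not_not] at hfx
          exact (hYmem x (hv x hx)).mp hfx)]
        congr 1
        apply List.map_congr_left
        intro x hx
        rw [List.mem_filter] at hx
        have hxY : x ∉ Y := by simpa using hx.2
        have hne : φ x ≠ 1 := fun hone => hxY ((hYmem x (hv x hx.1)).mpr hone)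
        exact (hψspec x hne).symm
      rw [key w (fun x hx => List.mem_toFinset.mpr hx),
        key w' (fun x hx => hcontent ▸ List.mem_toFinset.mpr hx),
        h Y hY ψ]
end

section
/- If two semigroups S₁ and S₂ satisfy exactly the same identities, then the monoids S₁¹ and S₂¹ (obtained by adjoining identity elements) also satisfy exactly the same identities among identities w ≈ w' with content(w) = content(w'). -/
section Aux

variable {X S : Type*} [Semigroup S]

/-- Interpret an optional semigroup element in `WithOne S`. -/
def opt : Option S → WithOne S
  | none => 1
  | some s => (s : WithOne S)

lemma opt_inj : Function.Injective (opt : Option S → WithOne S) := by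
  intro a b h
  cases a <;> cases b
  · rfl
  · exact absurd h.symm WithOne.coe_ne_one
  · exact absurd h WithOne.coe_ne_one
  · exact congrArg some (WithOne.coe_inj.mp h)

lemma foldl_mul_assoc (ψ : X → S) (l : List X) (a b : S) :
    a * l.foldl (fun c y => c * ψ y) b = l.foldl (fun c y => c * ψ y) (a * b) := by
  induction l generalizing b with
  | nil => rfl
  | cons y ys ih => simpa [mul_assoc] using ih (b * ψ y)

lemma key (φ : X → WithOne S) (ψ : X → S) (q : X → Bool)
    (hq1 : ∀ x, q x = true → φ x = (ψ x : WithOne S))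
    (hq0 : ∀ x, q x = false → φ x = 1) (w : List X) :
    (w.map φ).prod = opt (sprod ψ (w.filter q)) := by
  induction w with
  | nil => rfl
  | cons x xs ih =>
    cases hx : q x with
    | false =>
      rw [List.map_cons, List.prod_cons, hq0 x hx, one_mul, ih,
        List.filter_cons_of_neg (by simp [hx])]
    | true =>
      rw [List.map_cons, List.prod_cons, hq1 x hx, ih,
        List.filter_cons_of_pos (by simp [hx])]
      cases h : xs.filter q with
      | nil => simp [sprod, opt]
      | cons y ys =>
        show (ψ x : WithOne S) * opt (some (ys.foldl (fun a z => a * ψ z) (ψ y))) = _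
        simp only [opt, sprod, List.foldl_cons, ← WithOne.coe_mul]
        rw [foldl_mul_assoc]

lemma main_dir {X S₁ S₂ : Type*} [DecidableEq X] [Semigroup S₁] [Semigroup S₂]
    (h1 : ∀ w w' : List X, w ≠ [] → w' ≠ [] →
      (∀ φ : X → S₁, sprod φ w = sprod φ w') → (∀ φ : X → S₂, sprod φ w = sprod φ w'))
    (w w' : List X) (hc : w.toFinset = w'.toFinset)
    (hS1 : ∀ φ : X → WithOne S₁, (w.map φ).prod = (w'.map φ).prod) :
    ∀ φ : X → WithOne S₂, (w.map φ).prod = (w'.map φ).prod := by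
  classical
  intro φ
  set q : X → Bool := fun x => decide (φ x ≠ 1) with hqdef
  have hmem : ∀ x, x ∈ w ↔ x ∈ w' := by
    intro x
    rw [← List.mem_toFinset, ← List.mem_toFinset, hc]
  by_cases hu : w.filter q = []
  · -- all letters map to 1
    have hall : ∀ x ∈ w, φ x = 1 := by
      intro x hx
      have := List.filter_eq_nil_iff.mp hu x hx
      simpa [hqdef] using this
    have hall' : ∀ x ∈ w', φ x = 1 := fun x hx => hall x ((hmem x).mpr hx)
    rw [List.prod_eq_one, List.prod_eq_one]
    · intro a ha
      obtain ⟨x, hx, rfl⟩ := List.mem_map.mp ha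
      exact hall' x hx
    · intro a ha
      obtain ⟨x, hx, rfl⟩ := List.mem_map.mp ha
      exact hall x hx
  · -- some letter maps to a genuine element
    have hu' : w'.filter q ≠ [] := by
      intro h
      apply hu
      rw [List.filter_eq_nil_iff] at h ⊢
      exact fun x hx => h x ((hmem x).mp hx)
    obtain ⟨x₀, hx₀⟩ := List.exists_mem_of_ne_nil _ hu
    have hqx₀ : q x₀ = true := List.of_mem_filter hx₀
    have hx₀ne : φ x₀ ≠ 1 := by simpa [hqdef] using hqx₀
    set ψ : X → S₂ := fun x =>
      if h : φ x = 1 then WithOne.unone hx₀ne else WithOne.unone h with hψdef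
    have hq1 : ∀ x, q x = true → φ x = (ψ x : WithOne S₂) := by
      intro x hx
      have hne : φ x ≠ 1 := by simpa [hqdef] using hx
      simp [hψdef, hne, WithOne.coe_unone]
    have hq0 : ∀ x, q x = false → φ x = 1 := by
      intro x hx
      simpa [hqdef] using hx
    -- S₁ satisfies u ≈ u'
    have hS1uu : ∀ ψ₁ : X → S₁, sprod ψ₁ (w.filter q) = sprod ψ₁ (w'.filter q) := by
      intro ψ₁
      apply opt_inj
      have k1 := key (fun x => if q x then (ψ₁ x : WithOne S₁) else 1) ψ₁ q
        (fun x hx => by simp [hx]) (fun x hx => by simp [hx]) w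
      have k2 := key (fun x => if q x then (ψ₁ x : WithOne S₁) else 1) ψ₁ q
        (fun x hx => by simp [hx]) (fun x hx => by simp [hx]) w'
      rw [← k1, ← k2]
      exact hS1 _
    have hS2uu := h1 _ _ hu hu' hS1uu ψ
    rw [key φ ψ q hq1 hq0 w, key φ ψ q hq1 hq0 w', hS2uu]

end Aux

/-- If two semigroups `S₁` and `S₂` satisfy exactly the same identities, then the
monoids `S₁¹` and `S₂¹` obtained by adjoining identity elements satisfy exactly the
same identities among identities `w ≈ w'` with `content w = content w'`. -/
theorem stmt_14 {X S₁ S₂ : Type*} [DecidableEq X] [Countable X] [Infinite X]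
    [Semigroup S₁] [Semigroup S₂]
    (heq : ∀ w w' : List X, w ≠ [] → w' ≠ [] →
      ((∀ φ : X → S₁, sprod φ w = sprod φ w') ↔ (∀ φ : X → S₂, sprod φ w = sprod φ w'))) :
    ∀ w w' : List X, w ≠ [] → w' ≠ [] → w.toFinset = w'.toFinset →
      ((∀ φ : X → WithOne S₁, (w.map φ).prod = (w'.map φ).prod) ↔
        (∀ φ : X → WithOne S₂, (w.map φ).prod = (w'.map φ).prod)) := by
  intro w w' hw hw' hc
  constructor
  · exact main_dir (fun u u' hu hu' => (heq u u' hu hu').mp) w w' hc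
  · exact main_dir (fun u u' hu hu' => (heq u u' hu hu').mpr) w w' hc
end

section
/- In the Rees matrix semigroup S = M({1,2}, C∞, {1,2}; P) over the infinite cyclic group C∞ = ⟨c⟩ with sandwich matrix P = ((e, c), (e, e)), if an identity w ≈ w' holds in S then w and w' begin with the same letter. -/
/-- The sandwich matrix `P = ((e, c), (e, e))` over the infinite cyclic group
`C∞ = Multiplicative ℤ` with generator `c = ofAdd 1`. -/
def pMat : Fin 2 → Fin 2 → Multiplicative ℤ := fun l j =>
  if l = 0 ∧ j = 1 then Multiplicative.ofAdd 1 else 1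

/-- The Rees matrix semigroup `S = M({1,2}, C∞, {1,2}; P)`. -/
def ReesS : Type := Fin 2 × Multiplicative ℤ × Fin 2

instance : Mul ReesS :=
  ⟨fun a b => (a.1, a.2.1 * pMat a.2.2 b.1 * b.2.1, b.2.2)⟩

instance : Semigroup ReesS where
  mul_assoc := by
    rintro ⟨i, g, l⟩ ⟨j, h, m⟩ ⟨k, f, r⟩
    show (i, (g * pMat l j * h) * pMat m k * f, r) =
      (i, g * pMat l j * (h * pMat m k * f), r)
    simp only [mul_assoc]

/-- If an identity `w ≈ w'` holds in the Rees matrix semigroup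
`M({1,2}, C∞, {1,2}; P)` with `P = ((e, c), (e, e))`, then `w` and `w'` begin with the
same letter. -/
theorem stmt_17 {X : Type*} (w w' : FreeSemigroup X)
    (h : ∀ φ : FreeSemigroup X →ₙ* ReesS, φ w = φ w') :
    w.head = w'.head := by
  classical
  -- send the head of w to (1,e,1), everything else to (2,e,2)
  have key : ∀ (f : X → ReesS) (u : FreeSemigroup X),
      ((FreeSemigroup.lift f) u).1 = (f u.head).1 := by
    intro f u
    induction u using FreeSemigroup.recOnMul with
    | ih1 x => simp
    | ih2 x y ihx ihy =>
      rw [map_mul]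
      show ((FreeSemigroup.lift f) (FreeSemigroup.of x)).1 = _
      rw [ihx, FreeSemigroup.head_mul]
  set f : X → ReesS := fun x => (if x = w.head then (0 : Fin 2) else 1, 1, 0) with hf
  have := h (FreeSemigroup.lift f)
  have h1 : (f w.head).1 = (f w'.head).1 := by
    rw [← key f w, ← key f w', this]
  by_contra hne
  have h2 : (0 : Fin 2) = 1 := by
    have e1 : (f w.head).1 = 0 := by simp [hf]
    have e2 : (f w'.head).1 = 1 := by
      simp only [hf]
      rw [if_neg (fun hc => hne hc.symm)]
    rw [e1, e2] at h1
    exact h1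
  exact absurd h2 (by decide)
end
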